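/- Let J be an open interval, g : J → ℝ continuously differentiable with g > 0 on J, and let X : [0,1] → J be continuously differentiable with X′(t) = g(X(t)) for all t ∈ [0,1] and X(0) = x₀. Let φ : J → ℝ be continuous. If v : [0,1] → ℝ is differentiable and satisfies v′(t) = g′(X(t)) v(t) + φ(X(t)) for all t, with v(0) = 0, then v(t) = g(X(t)) ∫_{x₀}^{X(t)} φ(x) / (g(x))² dx for all t ∈ [0,1]. -/

import Mathlib

open MeasureTheory Set

/-- Closed form of the first-order variational equation (equations (A.2) and (A.7)):
if `X' = g ∘ X` on `[0,1]` with `X(0) = x₀`, and `v' = g'(X(t)) v + φ(X(t))` with `v(0) = 0`,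
then `v(t) = g(X(t)) ∫_{x₀}^{X(t)} φ(x)/g(x)² dx`. -/
theorem stmt_5
    (J : Set ℝ) (hJopen : IsOpen J) (hJ : J.OrdConnected)
    (g g' : ℝ → ℝ) (hg : ∀ x ∈ J, HasDerivAt g (g' x) x)
    (hg' : ContinuousOn g' J) (hgpos : ∀ x ∈ J, 0 < g x)
    (X : ℝ → ℝ) (hmap : ∀ t ∈ Icc (0:ℝ) 1, X t ∈ J)
    (hX : ∀ t ∈ Icc (0:ℝ) 1, HasDerivWithinAt X (g (X t)) (Icc (0:ℝ) 1) t)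
    (x₀ : ℝ) (hX0 : X 0 = x₀)
    (φ : ℝ → ℝ) (hφ : ContinuousOn φ J)
    (v : ℝ → ℝ)
    (hv : ∀ t ∈ Icc (0:ℝ) 1,
      HasDerivWithinAt v (g' (X t) * v t + φ (X t)) (Icc (0:ℝ) 1) t)
    (hv0 : v 0 = 0) :
    ∀ t ∈ Icc (0:ℝ) 1, v t = g (X t) * ∫ x in x₀..(X t), φ x / (g x) ^ 2 := by
  set f : ℝ → ℝ := fun x => φ x / (g x) ^ 2 with hf_def
  have hgcont : ContinuousOn g J := fun x hx => (hg x hx).continuousAt.continuousWithinAt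
  have hfcont : ContinuousOn f J := by
    apply hφ.div (hgcont.pow 2)
    intro x hx
    exact pow_ne_zero _ (hgpos x hx).ne'
  have hx0J : x₀ ∈ J := hX0 ▸ hmap 0 (by norm_num)
  set h : ℝ → ℝ := fun y => ∫ x in x₀..y, f x with hh_def
  -- FTC: h has derivative f y at every y ∈ J
  have hderiv_h : ∀ y ∈ J, HasDerivAt h (f y) y := by
    intro y hy
    apply intervalIntegral.integral_hasDerivAt_right
    · exact (hfcont.mono (hJ.uIcc_subset hx0J hy)).intervalIntegrable
    · exact hfcont.stronglyMeasurableAtFilter hJopen y hy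
    · exact hfcont.continuousAt (hJopen.mem_nhds hy)
  -- the auxiliary function
  set W : ℝ → ℝ := fun t => v t / g (X t) - h (X t) with hW_def
  have hWderiv : ∀ t ∈ Icc (0:ℝ) 1, HasDerivWithinAt W 0 (Icc (0:ℝ) 1) t := by
    intro t ht
    have hXt : X t ∈ J := hmap t ht
    have hgne : g (X t) ≠ 0 := (hgpos _ hXt).ne'
    have hgX : HasDerivWithinAt (fun s => g (X s)) (g' (X t) * g (X t)) (Icc (0:ℝ) 1) t :=
      (hg (X t) hXt).comp_hasDerivWithinAt t (hX t ht)
    have hdiv : HasDerivWithinAt (fun s => v s / g (X s))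
        (((g' (X t) * v t + φ (X t)) * g (X t) - v t * (g' (X t) * g (X t))) / (g (X t)) ^ 2)
        (Icc (0:ℝ) 1) t := (hv t ht).div hgX hgne
    have hhX : HasDerivWithinAt (fun s => h (X s)) (f (X t) * g (X t)) (Icc (0:ℝ) 1) t :=
      (hderiv_h (X t) hXt).comp_hasDerivWithinAt t (hX t ht)
    have := hdiv.sub hhX
    refine this.congr_deriv ?_
    simp only [hf_def]
    field_simp
    ring
  have hWcont : ContinuousOn W (Icc (0:ℝ) 1) := fun t ht => (hWderiv t ht).continuousWithinAt
  have hWconst : ∀ t ∈ Icc (0:ℝ) 1, W t = W 0 := by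
    apply constant_of_has_deriv_right_zero hWcont
    intro x hx
    apply (hWderiv x (Ico_subset_Icc_self hx)).mono_of_mem_nhdsWithin
    refine mem_nhdsWithin.2 ⟨Iio 1, isOpen_Iio, hx.2, ?_⟩
    rintro y ⟨hy1, hy2⟩
    exact ⟨le_trans hx.1 hy2, le_of_lt hy1⟩
  have hW0 : W 0 = 0 := by
    simp [hW_def, hh_def, hv0, hX0]
  intro t ht
  have := hWconst t ht
  rw [hW0, hW_def] at this
  have hgne : g (X t) ≠ 0 := (hgpos _ (hmap t ht)).ne'
  have hveq : v t / g (X t) = h (X t) := by linarith [this]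
  field_simp at hveq
  rw [hveq]
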